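/- Let θ ∈ (0,1), e ∈ [0,1], p ∈ (0,1/2) and r = 1−p, and consider a population with no reciprocators (δ = 0). Then the function g(γ) = π_a(γ,0) − π_s(γ,0) satisfies g(0) = −2p and is differentiable at γ = 0 with g′(0) = (1−e)·θ/(1−θ); equivalently, π_a(γ,0) − π_s(γ,0) = −2p + (1−e)·θ/(1−θ)·γ + o(γ) as γ → 0. -/

import Mathlib

/-- With `r = 1 − p` and no reciprocators, the payoff difference
`g γ = π_a(γ,0) − π_s(γ,0)` satisfies `g 0 = −2p` and `g′ 0 = (1−e)·θ/(1−θ)`. -/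
theorem altruist_selfish_payoff_expansion (θ e p : ℝ)
    (hθ : θ ∈ Set.Ioo (0:ℝ) 1) (he : e ∈ Set.Icc (0:ℝ) 1)
    (hp : p ∈ Set.Ioo (0:ℝ) (1/2)) :
    let r := 1 - p
    let πa : ℝ → ℝ := fun γ =>
      (1 - e) * (r * θ * 0 / (1 - (1 - γ) * θ)
        + r * (2 * γ + 0) / (1 - (1 - γ - 0) * θ)) + e * r * (0 + 2 * γ)
    let πs : ℝ → ℝ := fun γ =>
      (1 - e) * ((2 * p * (1 - γ) * (1 - θ) + γ) / (1 - (1 - γ) * θ)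
        + (1 - θ) * γ / (1 - (1 - γ - 0) * θ)) + 2 * e * (p * (1 - γ) + γ)
    let g : ℝ → ℝ := fun γ => πa γ - πs γ
    g 0 = -(2 * p) ∧ HasDerivAt g ((1 - e) * θ / (1 - θ)) 0 := by
  intro r πa πs g
  obtain ⟨hθ0, hθ1⟩ := hθ
  have hd : (1 : ℝ) - θ ≠ 0 := by linarith
  have hden : (1 : ℝ) - (1 - (0:ℝ)) * θ ≠ 0 := by simpa using hd
  constructor
  · show (1 - e) * (r * θ * 0 / (1 - (1 - 0) * θ)
        + r * (2 * 0 + 0) / (1 - (1 - 0 - 0) * θ)) + e * r * (0 + 2 * 0)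
      - ((1 - e) * ((2 * p * (1 - 0) * (1 - θ) + 0) / (1 - (1 - 0) * θ)
        + (1 - θ) * 0 / (1 - (1 - 0 - 0) * θ)) + 2 * e * (p * (1 - 0) + 0)) = -(2 * p)
    field_simp
    linear_combination (2 * p * (e - 1)) * mul_inv_cancel₀ hd
  · have hD : HasDerivAt (fun γ : ℝ => 1 - (1 - γ) * θ) θ 0 := by
      have : HasDerivAt (fun γ : ℝ => 1 - (1 - γ) * θ) (-((-1) * θ)) 0 := by
        exact (((hasDerivAt_id (0:ℝ)).const_sub 1).mul_const θ).const_sub 1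
      simpa using this
    have hD' : HasDerivAt (fun γ : ℝ => 1 - (1 - γ - 0) * θ) θ 0 := by
      have : HasDerivAt (fun γ : ℝ => 1 - (1 - γ - 0) * θ) (-((-1) * θ)) 0 := by
        exact ((((hasDerivAt_id (0:ℝ)).const_sub 1).sub_const 0).mul_const θ).const_sub 1
      simpa using this
    have hn1 : HasDerivAt (fun γ : ℝ => r * θ * 0) 0 0 := hasDerivAt_const _ _
    have hn2 : HasDerivAt (fun γ : ℝ => r * (2 * γ + 0)) (r * 2) 0 := by
      have : HasDerivAt (fun γ : ℝ => r * (2 * γ + 0)) (r * (2 * 1)) 0 := by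
        exact (((hasDerivAt_id (0:ℝ)).const_mul 2).add_const 0).const_mul r
      simpa using this
    have hn3 : HasDerivAt (fun γ : ℝ => 2 * p * (1 - γ) * (1 - θ) + γ)
        (2 * p * (-1) * (1 - θ) + 1) 0 := by
      have h : HasDerivAt (fun γ : ℝ => 2 * p * (1 - γ) * (1 - θ) + γ)
          ((2 * p * (-1)) * (1 - θ) + 1) 0 := by
        have hb : HasDerivAt (fun γ : ℝ => 2 * p * (1 - γ)) (2 * p * (-1)) 0 := by
          have := ((hasDerivAt_id (0:ℝ)).const_sub 1).const_mul (2 * p)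
          simpa using this
        exact (hb.mul_const (1 - θ)).add (hasDerivAt_id 0)
      simpa using h
    have hn4 : HasDerivAt (fun γ : ℝ => (1 - θ) * γ) (1 - θ) 0 := by
      simpa using (hasDerivAt_id (0:ℝ)).const_mul (1 - θ)
    have hden' : (1 : ℝ) - (1 - (0:ℝ) - 0) * θ ≠ 0 := by simpa using hd
    have t1 := hn1.div hD hden
    have t2 := hn2.div hD' hden'
    have t3 := hn3.div hD hden
    have t4 := hn4.div hD' hden'
    have ha : HasDerivAt πa
        ((1 - e) * ((0 * (1 - (1 - (0:ℝ)) * θ) - r * θ * 0 * θ) / (1 - (1 - (0:ℝ)) * θ) ^ 2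
          + (r * 2 * (1 - (1 - (0:ℝ) - 0) * θ) - r * (2 * 0 + 0) * θ) / (1 - (1 - (0:ℝ) - 0) * θ) ^ 2)
          + e * r * 2) 0 := by
      have he2 : HasDerivAt (fun γ : ℝ => e * r * (0 + 2 * γ)) (e * r * 2) 0 := by
        have := (((hasDerivAt_id (0:ℝ)).const_mul 2).const_add 0).const_mul (e * r)
        simpa using this
      exact ((t1.add t2).const_mul (1 - e)).add he2
    have hs : HasDerivAt πs
        ((1 - e) * (((2 * p * (-1) * (1 - θ) + 1) * (1 - (1 - (0:ℝ)) * θ)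
            - (2 * p * (1 - (0:ℝ)) * (1 - θ) + 0) * θ) / (1 - (1 - (0:ℝ)) * θ) ^ 2
          + ((1 - θ) * (1 - (1 - (0:ℝ) - 0) * θ) - (1 - θ) * 0 * θ) / (1 - (1 - (0:ℝ) - 0) * θ) ^ 2)
          + 2 * e * (p * (-1) + 1)) 0 := by
      have he2 : HasDerivAt (fun γ : ℝ => 2 * e * (p * (1 - γ) + γ)) (2 * e * (p * (-1) + 1)) 0 := by
        have hb : HasDerivAt (fun γ : ℝ => p * (1 - γ) + γ) (p * (-1) + 1) 0 := by
          have := (((hasDerivAt_id (0:ℝ)).const_sub 1).const_mul p).add (hasDerivAt_id 0)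
          exact this
        simpa using hb.const_mul (2 * e)
      exact ((t3.add t4).const_mul (1 - e)).add he2
    have hg := ha.sub hs
    refine hg.congr_deriv ?_
    simp only [r, sub_zero, one_mul, mul_zero, zero_mul, add_zero, zero_add, mul_one, zero_sub]
    field_simp
    ring
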